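/- If an LLL-reduced basis B = (b_1,…,b_N) of a lattice L is gap-free, then the maximum Gram–Schmidt norm satisfies max_i ‖b_i*‖ ≤ (4/3 + ε)^{(N−1)/4} · vol(L)^{1/N}. -/

import Mathlib

open scoped BigOperators

/-- Gram–Schmidt orthogonalization for families indexed by `Fin M`. -/
noncomputable def gramSchmidtFin {N M : ℕ} (b : Fin M → EuclideanSpace ℝ (Fin N)) :
    Fin M → EuclideanSpace ℝ (Fin N) :=
  @InnerProductSpace.gramSchmidt ℝ _ _ _ _ (Fin M) _ _ ((Fin.Lt.isWellOrder M).toIsWellFounded) b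

/-- Key combinatorial lemma: for an "almost decreasing" gap-free positive sequence attaining its
maximum `M`, for every `k ≤ N` there is a `k`-element set on which every value is at least
`M / α^(k-1)` and whose product is at least `M^k / α^(0+1+⋯+(k-1))`. -/
lemma gapfree_exists_good_set {N : ℕ} (f : Fin N → ℝ) (α M : ℝ) (hα : 1 ≤ α)
    (hf : ∀ j, 0 < f j) (hM : ∀ j, f j ≤ M) (m : Fin N) (hm : f m = M)
    (hstep : ∀ i : Fin N, ∀ h : i.val + 1 < N, f i ≤ α * f ⟨i.val + 1, h⟩)
    (hgap : ∀ r : ℕ, r + 1 < N → ∃ i j : Fin N, i.val ≤ r ∧ r < j.val ∧ f j ≤ f i) :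
    ∀ k, k ≤ N → ∃ S : Finset (Fin N), S.card = k ∧
      (∀ j ∈ S, M ≤ α ^ (k - 1) * f j) ∧
      M ^ k ≤ α ^ (∑ i ∈ Finset.range k, i) * ∏ j ∈ S, f j := by
  have hM0 : 0 < M := lt_of_lt_of_le (hf m) (hM m)
  have hα0 : 0 < α := lt_of_lt_of_le one_pos hα
  intro k
  induction k with
  | zero =>
    intro _
    exact ⟨∅, by simp, by simp, by simp⟩
  | succ k ih =>
    intro hk1
    have hkN : k < N := Nat.lt_of_succ_le hk1
    obtain ⟨S, hcard, hel, hprod⟩ := ih (le_of_lt hkN)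
    -- find a new element
    have hnew : ∃ x : Fin N, x ∉ S ∧ M ≤ α ^ k * f x := by
      by_cases hmS : m ∈ S
      · by_cases hA : ∃ j ∈ S, ∃ h : j.val + 1 < N, (⟨j.val + 1, h⟩ : Fin N) ∉ S
        · obtain ⟨j, hjS, h, hnot⟩ := hA
          refine ⟨⟨j.val + 1, h⟩, hnot, ?_⟩
          have h1 : M ≤ α ^ (k - 1) * f j := hel j hjS
          have h2 : f j ≤ α * f ⟨j.val + 1, h⟩ := hstep j h
          have hk1' : 1 ≤ k := by
            rcases Nat.eq_zero_or_pos k with h0 | h0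
            · exfalso
              have : S = ∅ := Finset.card_eq_zero.mp (by omega)
              rw [this] at hjS; simp at hjS
            · exact h0
          calc M ≤ α ^ (k - 1) * f j := h1
            _ ≤ α ^ (k - 1) * (α * f ⟨j.val + 1, h⟩) := by
                have := pow_pos hα0 (k - 1); nlinarith
            _ = α ^ (k - 1 + 1) * f ⟨j.val + 1, h⟩ := by ring
            _ = α ^ k * f ⟨j.val + 1, h⟩ := by
                congr 2; omega
        · push_neg at hA
          -- S is successor-closed, hence a suffix
          have hcl : ∀ n : ℕ, ∀ hn : n < N, (∃ j0 ∈ S, j0.val ≤ n) → (⟨n, hn⟩ : Fin N) ∈ S := by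
            intro n
            induction n with
            | zero =>
              rintro hn ⟨j0, hj0S, hj0⟩
              have : j0 = ⟨0, hn⟩ := by ext; simp; omega
              rwa [this] at hj0S
            | succ n ihn =>
              rintro hn ⟨j0, hj0S, hj0⟩
              rcases Nat.lt_or_ge j0.val (n + 1) with hlt | hge
              · have hnN : n < N := by omega
                have hmem : (⟨n, hnN⟩ : Fin N) ∈ S := ihn hnN ⟨j0, hj0S, by omega⟩
                have := hA ⟨n, hnN⟩ hmem hn
                exact this
              · have : j0 = ⟨n + 1, hn⟩ := by ext; simp; omega
                rwa [this] at hj0S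
          have hSne : S.Nonempty := ⟨m, hmS⟩
          set s := S.min' hSne with hs
          have hsuffix : ∀ j : Fin N, s.val ≤ j.val → j ∈ S := by
            intro j hj
            have := hcl j.val j.isLt ⟨s, S.min'_mem hSne, hj⟩
            simpa using this
          have hs1 : 1 ≤ s.val := by
            by_contra h0
            have : ∀ j : Fin N, j ∈ S := fun j => hsuffix j (by omega)
            have : Finset.univ ⊆ S := fun j _ => this j
            have := Finset.card_le_card this
            simp [hcard] at this
            omega
          obtain ⟨i, j, hi, hj, hfji⟩ := hgap (s.val - 1) (by omega)
          have hjS : j ∈ S := hsuffix j (by omega)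
          refine ⟨i, ?_, ?_⟩
          · intro hiS
            have := S.min'_le i hiS
            rw [← hs] at this
            have : s.val ≤ i.val := this
            omega
          · calc M ≤ α ^ (k - 1) * f j := hel j hjS
              _ ≤ α ^ (k - 1) * f i := by
                  have := pow_pos hα0 (k - 1); nlinarith
              _ ≤ α ^ k * f i := by
                  exact mul_le_mul_of_nonneg_right (pow_le_pow_right₀ hα (Nat.sub_le k 1))
                    (le_of_lt (hf i))
      · refine ⟨m, hmS, ?_⟩
        have h1 : (1 : ℝ) ≤ α ^ k := one_le_pow₀ hα
        calc M = f m := hm.symm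
          _ = 1 * f m := (one_mul _).symm
          _ ≤ α ^ k * f m := mul_le_mul_of_nonneg_right h1 (le_of_lt (hf m))
    obtain ⟨x, hxS, hx⟩ := hnew
    refine ⟨insert x S, ?_, ?_, ?_⟩
    · rw [Finset.card_insert_of_notMem hxS, hcard]
    · intro j hj
      rcases Finset.mem_insert.mp hj with rfl | hjS
      · simpa using hx
      · calc M ≤ α ^ (k - 1) * f j := hel j hjS
          _ ≤ α ^ (k + 1 - 1) * f j := by
              exact mul_le_mul_of_nonneg_right (pow_le_pow_right₀ hα (by omega))
                (le_of_lt (hf j))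
    · rw [Finset.prod_insert hxS, Finset.sum_range_succ]
      calc M ^ (k + 1) = M ^ k * M := pow_succ M k
        _ ≤ (α ^ (∑ i ∈ Finset.range k, i) * ∏ j ∈ S, f j) * (α ^ k * f x) := by
            apply mul_le_mul hprod hx (le_of_lt hM0)
            exact le_of_lt (mul_pos (pow_pos hα0 _) (Finset.prod_pos (fun j _ => hf j)))
        _ = α ^ ((∑ i ∈ Finset.range k, i) + k) * (f x * ∏ j ∈ S, f j) := by
            rw [pow_add]; ring

/-- Gap-free LLL: if an LLL-reduced basis (whose successive Gram–Schmidt norms satisfy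
`‖b i*‖ ≤ √(4/3+ε)·‖b (i+1)*‖`, a consequence of the Lovász condition) is gap-free,
then every Gram–Schmidt norm is at most `(4/3+ε)^((N−1)/4) · vol(L)^(1/N)`. -/
theorem gap_free_LLL (N : ℕ) (hN : 1 ≤ N) (ε : ℝ) (hε : 0 < ε)
    (b : Fin N → EuclideanSpace ℝ (Fin N)) (hb : LinearIndependent ℝ b)
    (bs : Fin N → EuclideanSpace ℝ (Fin N)) (hbs : bs = gramSchmidtFin b)
    (hLLL : ∀ i : Fin N, ∀ h : i.val + 1 < N,
      ‖bs i‖ ≤ Real.sqrt (4 / 3 + ε) * ‖bs ⟨i.val + 1, h⟩‖)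
    (hGapFree : ¬ ∃ r : ℕ, r + 1 < N ∧
      ∀ i j : Fin N, i.val ≤ r → r < j.val → ‖bs i‖ < ‖bs j‖) :
    ∀ i : Fin N, ‖bs i‖ ≤ (4 / 3 + ε) ^ ((N - 1 : ℝ) / 4) * (∏ j, ‖bs j‖) ^ ((1 : ℝ) / N) := by
  set A : ℝ := 4 / 3 + ε with hA
  have hA1 : (1 : ℝ) < A := by rw [hA]; linarith
  have hA0 : (0 : ℝ) < A := lt_trans one_pos hA1
  set α : ℝ := Real.sqrt A with hαdef
  have hα1 : (1 : ℝ) ≤ α := by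
    rw [hαdef, show (1 : ℝ) = Real.sqrt 1 from Real.sqrt_one.symm]
    exact Real.sqrt_le_sqrt (le_of_lt hA1)
  -- positivity of Gram–Schmidt norms
  have hpos : ∀ j : Fin N, 0 < ‖bs j‖ := by
    intro j
    rw [hbs]
    have hne : gramSchmidtFin b j ≠ 0 := by
      unfold gramSchmidtFin
      exact @InnerProductSpace.gramSchmidt_ne_zero ℝ _ _ _ _ (Fin N) _ _
        ((Fin.Lt.isWellOrder N).toIsWellFounded) b j hb
    exact norm_pos_iff.mpr hne
  -- maximum
  have hNpos : 0 < N := hN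
  haveI : Nonempty (Fin N) := ⟨⟨0, hNpos⟩⟩
  obtain ⟨m, hm⟩ := Finite.exists_max (fun j : Fin N => ‖bs j‖)
  set M : ℝ := ‖bs m‖ with hMdef
  -- gap-free in usable form
  push_neg at hGapFree
  have hgap : ∀ r : ℕ, r + 1 < N → ∃ i j : Fin N, i.val ≤ r ∧ r < j.val ∧ ‖bs j‖ ≤ ‖bs i‖ := by
    intro r hr
    obtain ⟨i, j, hi, hj, hij⟩ := hGapFree r hr
    exact ⟨i, j, hi, hj, hij⟩
  obtain ⟨S, hcard, _, hprod⟩ := gapfree_exists_good_set (fun j => ‖bs j‖) α M hα1 hpos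
    (fun j => hm j) m rfl hLLL hgap N (le_refl N)
  have hSuniv : S = Finset.univ := by
    apply Finset.eq_univ_of_card
    rw [hcard, Fintype.card_fin]
  rw [hSuniv] at hprod
  -- set up final bound
  set V : ℝ := ∏ j, ‖bs j‖ with hVdef
  have hV0 : 0 < V := Finset.prod_pos (fun j _ => hpos j)
  set E : ℕ := ∑ i ∈ Finset.range N, i with hEdef
  have hE2 : (E : ℝ) * 2 = (N : ℝ) * ((N : ℝ) - 1) := by
    have h := Finset.sum_range_id_mul_two N
    have hcast : ((∑ i ∈ Finset.range N, i) * 2 : ℕ) = (N * (N - 1) : ℕ) := h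
    have := congrArg (fun n : ℕ => (n : ℝ)) hcast
    push_cast [Nat.cast_sub hN] at this
    rw [hEdef]
    push_cast
    linarith [this]
  have hM0 : 0 < M := hpos m
  -- the key inequality : M ^ N ≤ α ^ E * V
  have hkey : M ^ N ≤ α ^ E * V := hprod
  -- express α ^ E as a rpow of A
  have hαE : α ^ E = A ^ ((N : ℝ) * ((N : ℝ) - 1) / 4) := by
    rw [hαdef, Real.sqrt_eq_rpow, ← Real.rpow_natCast (A ^ ((1:ℝ)/2)) E,
      ← Real.rpow_mul (le_of_lt hA0)]
    congr 1
    field_simp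
    linarith [hE2]
  set R : ℝ := A ^ ((N - 1 : ℝ) / 4) * V ^ ((1 : ℝ) / N) with hRdef
  have hR0 : 0 < R := mul_pos (Real.rpow_pos_of_pos hA0 _) (Real.rpow_pos_of_pos hV0 _)
  have hRN : R ^ N = A ^ ((N : ℝ) * ((N : ℝ) - 1) / 4) * V := by
    rw [hRdef, mul_pow, ← Real.rpow_natCast (A ^ ((N - 1 : ℝ) / 4)) N,
      ← Real.rpow_natCast (V ^ ((1 : ℝ) / N)) N,
      ← Real.rpow_mul (le_of_lt hA0), ← Real.rpow_mul (le_of_lt hV0)]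
    have hNne : (N : ℝ) ≠ 0 := Nat.cast_ne_zero.mpr (by omega)
    rw [show (1 : ℝ) / N * N = 1 by field_simp, Real.rpow_one]
    congr 2
    ring
  have hMR : M ≤ R := by
    have hMN : M ^ N ≤ R ^ N := by
      rw [hRN, ← hαE]
      exact hkey
    exact le_of_pow_le_pow_left₀ (by omega) (le_of_lt hR0) hMN
  intro i
  calc ‖bs i‖ ≤ M := hm i
    _ ≤ R := hMR
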